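/- Let H be a hereditary chip-firing model on a connected loopless multigraph G with sink v₀. A stable configuration ν that is nonnegative off the sink is critical if and only if every maximal finite sequence of firings of single active vertices starting from ν − Qχ_{{v₀}} (where at each step some vertex that is active in the current configuration is fired, the fired vertex possibly going into debt, and the sequence cannot be extended because no vertex is active in the final configuration) terminates at the configuration ν. -/

import Mathlib

open Finset

/-- The degree of a vertex in the multigraph encoded by the multiplicity
function `A : V → V → ℕ`. -/
def mDeg {V : Type*} [Fintype V] (A : V → V → ℕ) (v : V) : ℕ := ∑ w, A v w

/-- The `(u,w)` entry of the Laplacian matrix of the multigraph encoded by `A`. -/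
def mLap {V : Type*} [Fintype V] [DecidableEq V] (A : V → V → ℕ) (u w : V) : ℤ :=
  if u = w then (mDeg A u : ℤ) else -(A u w : ℤ)

/-- Fire according to an integer vector `f` of firing counts: `D - Q f`. -/
def fireVec {V : Type*} [Fintype V] [DecidableEq V] (A : V → V → ℕ) (D : V → ℤ)
    (f : V → ℤ) : V → ℤ :=
  fun v => D v - ∑ w, mLap A v w * f w

/-- The characteristic 0/1 vector of a finite set of vertices. -/
def chi {V : Type*} [DecidableEq V] (S : Finset V) : V → ℤ := fun v => if v ∈ S then 1 else 0

/-- Fire the set `S`: `D - Q χ_S`. -/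
def fireSet {V : Type*} [Fintype V] [DecidableEq V] (A : V → V → ℕ) (D : V → ℤ)
    (S : Finset V) : V → ℤ :=
  fireVec A D (chi S)

/-- The multigraph encoded by `A` is connected. -/
def mConnected {V : Type*} (A : V → V → ℕ) : Prop :=
  (SimpleGraph.fromRel (fun u w => 0 < A u w)).Connected

/-- `H` is a hereditary chip-firing model with sink `v0`: a collection of subsets of
`V \ {v0}` that is downward closed and whose union is `V \ {v0}`. -/
def Hereditary {V : Type*} [DecidableEq V] (v0 : V) (H : Set (Finset V)) : Prop :=
  (∀ M ∈ H, v0 ∉ M) ∧ (∀ M ∈ H, ∀ B ⊆ M, B ∈ H) ∧ (∀ v, v ≠ v0 → ∃ M ∈ H, v ∈ M)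

/-- The set `M` is ready in `D`: firing `M` sends no vertex of `M` into debt. -/
def Ready {V : Type*} [Fintype V] [DecidableEq V] (A : V → V → ℕ) (D : V → ℤ)
    (M : Finset V) : Prop :=
  ∀ v ∈ M, 0 ≤ fireSet A D M v

/-- `D` is stable for the model `H`: no nonempty member of `H` is ready in `D`. -/
def Stable {V : Type*} [Fintype V] [DecidableEq V] (A : V → V → ℕ) (H : Set (Finset V))
    (D : V → ℤ) : Prop :=
  ∀ M ∈ H, M.Nonempty → ¬ Ready A D M

/-- A list of nonempty members of `H`, each ready in the configuration obtained from `D`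
by firing the previous ones. -/
def ValidSeq {V : Type*} [Fintype V] [DecidableEq V] (A : V → V → ℕ) (H : Set (Finset V)) :
    (V → ℤ) → List (Finset V) → Prop
  | _, [] => True
  | D, M :: L => M ∈ H ∧ M.Nonempty ∧ Ready A D M ∧ ValidSeq A H (fireSet A D M) L

/-- The configuration obtained from `D` by firing the sets of `L` in order. -/
def fireList {V : Type*} [Fintype V] [DecidableEq V] (A : V → V → ℕ) (D : V → ℤ)
    (L : List (Finset V)) : V → ℤ :=
  L.foldl (fireSet A) D

/-- `D` stabilizes to `E`: some finite sequence of firings of nonempty ready sets of `H`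
takes `D` to the stable configuration `E`. -/
def StabilizesTo {V : Type*} [Fintype V] [DecidableEq V] (A : V → V → ℕ)
    (H : Set (Finset V)) (D E : V → ℤ) : Prop :=
  ∃ L : List (Finset V), ValidSeq A H D L ∧ fireList A D L = E ∧ Stable A H E

/-- `D + Σ_{v ≠ v0} c(v) (χ_v - χ_{v0})`: add `c v` chips at each `v ≠ v0`, removing them
from the sink. -/
def addChips {V : Type*} [Fintype V] [DecidableEq V] (v0 : V) (D : V → ℤ) (c : V → ℕ) :
    V → ℤ :=
  fun v => if v = v0 then D v - ∑ w ∈ Finset.univ.erase v0, (c w : ℤ) else D v + c v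

/-- `D` is reachable from `D'`: one can add chips to `D'` (taking them from the sink) and
then fire nonempty ready sets of `H` to reach `D`. -/
def Reachable {V : Type*} [Fintype V] [DecidableEq V] (A : V → V → ℕ) (H : Set (Finset V))
    (v0 : V) (D D' : V → ℤ) : Prop :=
  ∃ c : V → ℕ, c v0 = 0 ∧ ∃ L : List (Finset V),
    ValidSeq A H (addChips v0 D' c) L ∧ fireList A (addChips v0 D' c) L = D

/-- `D` is recurrent: nonnegative off the sink, stable, and reachable from every
configuration nonnegative off the sink. -/
def Recurrent {V : Type*} [Fintype V] [DecidableEq V] (A : V → V → ℕ) (H : Set (Finset V))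
    (v0 : V) (D : V → ℤ) : Prop :=
  (∀ v, v ≠ v0 → 0 ≤ D v) ∧ Stable A H D ∧
    ∀ D' : V → ℤ, (∀ v, v ≠ v0 → 0 ≤ D' v) → Reachable A H v0 D D'

/-- A vertex `v` is active in `D` if some member of `H` containing `v` is ready in `D`. -/
def Active {V : Type*} [Fintype V] [DecidableEq V] (A : V → V → ℕ) (H : Set (Finset V))
    (D : V → ℤ) (v : V) : Prop :=
  ∃ M ∈ H, v ∈ M ∧ Ready A D M

/-- A list of vertices, each active in the configuration obtained by firing the previous
ones one at a time (a fired vertex may go into debt). -/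
def ActiveSeq {V : Type*} [Fintype V] [DecidableEq V] (A : V → V → ℕ)
    (H : Set (Finset V)) : (V → ℤ) → List V → Prop
  | _, [] => True
  | D, v :: L => Active A H D v ∧ ActiveSeq A H (fireSet A D {v}) L

/-- The configuration obtained from `D` by firing the single vertices of `L` in order. -/
def fireVerts {V : Type*} [Fintype V] [DecidableEq V] (A : V → V → ℕ) (D : V → ℤ)
    (L : List V) : V → ℤ :=
  L.foldl (fun E v => fireSet A E {v}) D

section AuxChip

variable {V : Type*} [Fintype V] [DecidableEq V]

lemma fireVec_zero (A : V → V → ℕ) (D : V → ℤ) : fireVec A D 0 = D := by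
  funext v; simp [fireVec]

lemma fireVec_fireVec (A : V → V → ℕ) (D f g : V → ℤ) :
    fireVec A (fireVec A D f) g = fireVec A D (f + g) := by
  funext v
  simp only [fireVec, Pi.add_apply, mul_add, Finset.sum_add_distrib]
  ring

lemma chi_erase {M : Finset V} {v : V} (hv : v ∈ M) :
    chi {v} + chi (M.erase v) = chi M := by
  funext w
  by_cases h : w = v <;> simp [chi, h, hv, Finset.mem_erase]

lemma fireSet_erase_eq (A : V → V → ℕ) (D : V → ℤ) {M : Finset V} {v : V} (hv : v ∈ M) :
    fireSet A (fireSet A D {v}) (M.erase v) = fireSet A D M := by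
  unfold fireSet; rw [fireVec_fireVec, chi_erase hv]

lemma fireSet_comm (A : V → V → ℕ) (D : V → ℤ) (u v : V) :
    fireSet A (fireSet A D {u}) {v} = fireSet A (fireSet A D {v}) {u} := by
  unfold fireSet; rw [fireVec_fireVec, fireVec_fireVec, add_comm]

lemma mLap_eq (A : V → V → ℕ) (hloop : ∀ v, A v v = 0) (v w : V) :
    mLap A v w = (if v = w then (mDeg A v : ℤ) else 0) - A v w := by
  unfold mLap
  split
  · next h => subst h; simp [hloop]
  · simp

lemma fireSet_apply (A : V → V → ℕ) (hloop : ∀ v, A v v = 0) (D : V → ℤ) (M : Finset V)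
    (v : V) :
    fireSet A D M v = D v - (if v ∈ M then (mDeg A v : ℤ) else 0) + ∑ w ∈ M, (A v w : ℤ) := by
  unfold fireSet fireVec chi
  have h1 : ∀ w, mLap A v w * (if w ∈ M then (1:ℤ) else 0)
      = if w ∈ M then mLap A v w else 0 := by
    intro w; split <;> simp
  rw [Finset.sum_congr rfl fun w _ => h1 w, Finset.sum_ite_mem, Finset.univ_inter]
  have h2 : ∑ w ∈ M, mLap A v w
      = (if v ∈ M then (mDeg A v : ℤ) else 0) - ∑ w ∈ M, (A v w : ℤ) := by
    rw [Finset.sum_congr rfl fun w _ => mLap_eq A hloop v w, Finset.sum_sub_distrib,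
      Finset.sum_ite_eq]
  rw [h2]; ring

lemma le_fireSet_of_not_mem (A : V → V → ℕ) (hloop : ∀ v, A v v = 0) (D : V → ℤ)
    {M : Finset V} {v : V} (hv : v ∉ M) : D v ≤ fireSet A D M v := by
  rw [fireSet_apply A hloop, if_neg hv]
  have : (0:ℤ) ≤ ∑ w ∈ M, (A v w : ℤ) := Finset.sum_nonneg fun w _ => by positivity
  linarith

lemma ready_mono (A : V → V → ℕ) (hloop : ∀ v, A v v = 0) {D D' : V → ℤ} {M : Finset V}
    (h : ∀ w ∈ M, D w ≤ D' w) (hr : Ready A D M) : Ready A D' M := by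
  intro v hv
  have h1 := hr v hv
  rw [fireSet_apply A hloop] at h1 ⊢
  have := h v hv
  linarith

lemma ready_erase (A : V → V → ℕ) {D : V → ℤ} {M : Finset V} {v : V} (hv : v ∈ M)
    (hr : Ready A D M) : Ready A (fireSet A D {v}) (M.erase v) := by
  intro w hw
  rw [fireSet_erase_eq A D hv]
  exact hr w (Finset.mem_of_mem_erase hw)

lemma ready_fire_outside (A : V → V → ℕ) (hloop : ∀ v, A v v = 0) {D : V → ℤ}
    {M : Finset V} {u : V} (hu : u ∉ M) (hr : Ready A D M) :
    Ready A (fireSet A D {u}) M := by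
  refine ready_mono A hloop (fun w hw => ?_) hr
  exact le_fireSet_of_not_mem A hloop D (by simp [Finset.mem_singleton]; rintro rfl; exact hu hw)

lemma active_after (A : V → V → ℕ) (hloop : ∀ v, A v v = 0) {H : Set (Finset V)}
    (hdc : ∀ M ∈ H, ∀ B ⊆ M, B ∈ H) {D : V → ℤ} {u v : V} (hne : v ≠ u)
    (ha : Active A H D v) : Active A H (fireSet A D {u}) v := by
  obtain ⟨M, hM, hvM, hr⟩ := ha
  by_cases hu : u ∈ M
  · exact ⟨M.erase u, hdc M hM _ (Finset.erase_subset _ _),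
      Finset.mem_erase.2 ⟨hne, hvM⟩, ready_erase A hu hr⟩
  · exact ⟨M, hM, hvM, ready_fire_outside A hloop hu hr⟩

end AuxChip

/-- One active-vertex firing step. -/
def StepR {V : Type*} [Fintype V] [DecidableEq V] (A : V → V → ℕ) (H : Set (Finset V))
    (D E : V → ℤ) : Prop :=
  ∃ v, Active A H D v ∧ E = fireSet A D {v}

section AuxChip2

variable {V : Type*} [Fintype V] [DecidableEq V]

lemma stepR_diamond (A : V → V → ℕ) (hloop : ∀ v, A v v = 0) {H : Set (Finset V)}
    (hdc : ∀ M ∈ H, ∀ B ⊆ M, B ∈ H) :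
    ∀ D E1 E2, StepR A H D E1 → StepR A H D E2 →
      ∃ F, Relation.ReflGen (StepR A H) E1 F ∧ Relation.ReflTransGen (StepR A H) E2 F := by
  rintro D E1 E2 ⟨v1, ha1, rfl⟩ ⟨v2, ha2, rfl⟩
  by_cases h : v1 = v2
  · subst h; exact ⟨_, Relation.ReflGen.refl, Relation.ReflTransGen.refl⟩
  · refine ⟨fireSet A (fireSet A D {v1}) {v2}, ?_, ?_⟩
    · exact Relation.ReflGen.single ⟨v2, active_after A hloop hdc (Ne.symm h) ha2, rfl⟩
    · exact Relation.ReflTransGen.single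
        ⟨v1, active_after A hloop hdc h ha1, fireSet_comm A D v1 v2⟩

lemma rtg_eq_of_normal {A : V → V → ℕ} {H : Set (Finset V)} {D E : V → ℤ}
    (h : Relation.ReflTransGen (StepR A H) D E) (hn : ∀ v, ¬ Active A H D v) : D = E := by
  rcases Relation.ReflTransGen.cases_head h with h' | ⟨F, ⟨v, hv, _⟩, _⟩
  · exact h'
  · exact absurd hv (hn v)

lemma not_active_of_stable {A : V → V → ℕ} {H : Set (Finset V)} {D : V → ℤ}
    (h : Stable A H D) : ∀ v, ¬ Active A H D v := by
  rintro v ⟨M, hM, hvM, hr⟩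
  exact h M hM ⟨v, hvM⟩ hr

lemma stable_of_not_active {A : V → V → ℕ} {H : Set (Finset V)} {D : V → ℤ}
    (h : ∀ v, ¬ Active A H D v) : Stable A H D := by
  rintro M hM ⟨v, hvM⟩ hr
  exact h v ⟨M, hM, hvM, hr⟩

lemma fireVerts_nil (A : V → V → ℕ) (D : V → ℤ) : fireVerts A D [] = D := rfl

lemma fireVerts_cons (A : V → V → ℕ) (D : V → ℤ) (v : V) (l : List V) :
    fireVerts A D (v :: l) = fireVerts A (fireSet A D {v}) l := rfl

lemma fireVerts_append (A : V → V → ℕ) (D : V → ℤ) (l1 l2 : List V) :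
    fireVerts A D (l1 ++ l2) = fireVerts A (fireVerts A D l1) l2 :=
  List.foldl_append

lemma activeSeq_append {A : V → V → ℕ} {H : Set (Finset V)} {D : V → ℤ} {l1 l2 : List V}
    (h1 : ActiveSeq A H D l1) (h2 : ActiveSeq A H (fireVerts A D l1) l2) :
    ActiveSeq A H D (l1 ++ l2) := by
  induction l1 generalizing D with
  | nil => exact h2
  | cons v l ih =>
    obtain ⟨hv, hl⟩ := h1
    exact ⟨hv, ih hl h2⟩

lemma activeSeq_rtg {A : V → V → ℕ} {H : Set (Finset V)} {D : V → ℤ} {l : List V}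
    (h : ActiveSeq A H D l) : Relation.ReflTransGen (StepR A H) D (fireVerts A D l) := by
  induction l generalizing D with
  | nil => exact Relation.ReflTransGen.refl
  | cons v l ih =>
    obtain ⟨hv, hl⟩ := h
    exact Relation.ReflTransGen.head ⟨v, hv, rfl⟩ (ih hl)

lemma fireSet_empty (A : V → V → ℕ) (D : V → ℤ) : fireSet A D ∅ = D := by
  have : chi (∅ : Finset V) = 0 := by funext w; simp [chi]
  unfold fireSet; rw [this, fireVec_zero]

lemma exists_activeSeq_of_ready (A : V → V → ℕ) {H : Set (Finset V)}
    (hdc : ∀ M ∈ H, ∀ B ⊆ M, B ∈ H) :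
    ∀ (n : ℕ) (M : Finset V) (D : V → ℤ), M.card = n → M ∈ H → Ready A D M →
      ∃ l : List V, ActiveSeq A H D l ∧ fireVerts A D l = fireSet A D M := by
  intro n
  induction n with
  | zero =>
    intro M D hc _ _
    rw [Finset.card_eq_zero] at hc
    subst hc
    exact ⟨[], trivial, (fireSet_empty A D).symm⟩
  | succ n ih =>
    intro M D hc hM hr
    obtain ⟨v, hv⟩ := Finset.card_pos.1 (by omega : 0 < M.card)
    obtain ⟨l, hl, he⟩ := ih (M.erase v) (fireSet A D {v})
      (by rw [Finset.card_erase_of_mem hv, hc]; omega)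
      (hdc M hM _ (Finset.erase_subset _ _)) (ready_erase A hv hr)
    refine ⟨v :: l, ⟨⟨M, hM, hv, hr⟩, hl⟩, ?_⟩
    rw [fireVerts_cons, he, fireSet_erase_eq A D hv]

lemma fireList_nil (A : V → V → ℕ) (D : V → ℤ) : fireList A D [] = D := rfl

lemma fireList_cons (A : V → V → ℕ) (D : V → ℤ) (M : Finset V) (L : List (Finset V)) :
    fireList A D (M :: L) = fireList A (fireSet A D M) L := rfl

lemma fireList_append (A : V → V → ℕ) (D : V → ℤ) (L1 L2 : List (Finset V)) :
    fireList A D (L1 ++ L2) = fireList A (fireList A D L1) L2 :=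
  List.foldl_append

lemma exists_activeSeq_of_validSeq (A : V → V → ℕ) {H : Set (Finset V)}
    (hdc : ∀ M ∈ H, ∀ B ⊆ M, B ∈ H) {D : V → ℤ} {L : List (Finset V)}
    (h : ValidSeq A H D L) :
    ∃ l : List V, ActiveSeq A H D l ∧ fireVerts A D l = fireList A D L := by
  induction L generalizing D with
  | nil => exact ⟨[], trivial, rfl⟩
  | cons M L ih =>
    obtain ⟨hM, _, hr, hL⟩ := h
    obtain ⟨l1, hl1, he1⟩ := exists_activeSeq_of_ready A hdc M.card M D rfl hM hr
    obtain ⟨l2, hl2, he2⟩ := ih hL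
    refine ⟨l1 ++ l2, activeSeq_append hl1 (by rw [he1]; exact hl2), ?_⟩
    rw [fireVerts_append, he1, he2, fireList_cons]

end AuxChip2

section AuxChip3

variable {V : Type*} [Fintype V] [DecidableEq V]

lemma sum_mLap (A : V → V → ℕ) (hsymm : ∀ u w, A u w = A w u) (hloop : ∀ v, A v v = 0)
    (w : V) : ∑ v, mLap A v w = 0 := by
  rw [Finset.sum_congr rfl fun v _ => mLap_eq A hloop v w, Finset.sum_sub_distrib,
    Finset.sum_ite_eq', if_pos (Finset.mem_univ w)]
  have : ∑ v, (A v w : ℤ) = (mDeg A w : ℤ) := by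
    unfold mDeg
    push_cast
    exact Finset.sum_congr rfl fun v _ => by rw [hsymm v w]
  rw [this, sub_self]

lemma sum_fireVec (A : V → V → ℕ) (hsymm : ∀ u w, A u w = A w u) (hloop : ∀ v, A v v = 0)
    (D f : V → ℤ) : ∑ v, fireVec A D f v = ∑ v, D v := by
  unfold fireVec
  rw [Finset.sum_sub_distrib, Finset.sum_comm]
  have : ∀ w : V, ∑ v, mLap A v w * f w = 0 := fun w => by
    rw [← Finset.sum_mul, sum_mLap A hsymm hloop, zero_mul]
  rw [Finset.sum_congr rfl fun w _ => this w]
  simp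

lemma fire_invariant (A : V → V → ℕ) (hsymm : ∀ u w, A u w = A w u)
    (hloop : ∀ v, A v v = 0) {v0 : V} {H : Set (Finset V)} (hs : ∀ M ∈ H, v0 ∉ M)
    {D : V → ℤ} {M : Finset V} (hM : M ∈ H) (hr : Ready A D M)
    (hnn : ∀ v, v ≠ v0 → 0 ≤ D v) :
    (∀ v, v ≠ v0 → 0 ≤ fireSet A D M v) ∧ D v0 ≤ fireSet A D M v0 ∧
      ∑ v, fireSet A D M v = ∑ v, D v := by
  refine ⟨fun v hv => ?_, le_fireSet_of_not_mem A hloop D (hs M hM), sum_fireVec A hsymm hloop D _⟩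
  by_cases hvM : v ∈ M
  · exact hr v hvM
  · exact le_trans (hnn v hv) (le_fireSet_of_not_mem A hloop D hvM)

lemma fireList_invariant (A : V → V → ℕ) (hsymm : ∀ u w, A u w = A w u)
    (hloop : ∀ v, A v v = 0) {v0 : V} {H : Set (Finset V)} (hs : ∀ M ∈ H, v0 ∉ M)
    {D : V → ℤ} {L : List (Finset V)} (hval : ValidSeq A H D L)
    (hnn : ∀ v, v ≠ v0 → 0 ≤ D v) :
    (∀ v, v ≠ v0 → 0 ≤ fireList A D L v) ∧ D v0 ≤ fireList A D L v0 ∧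
      ∑ v, fireList A D L v = ∑ v, D v := by
  induction L generalizing D with
  | nil => exact ⟨hnn, le_refl _, rfl⟩
  | cons M L ih =>
    obtain ⟨hM, -, hr, hL⟩ := hval
    obtain ⟨h1, h2, h3⟩ := fire_invariant A hsymm hloop hs hM hr hnn
    obtain ⟨h4, h5, h6⟩ := ih hL h1
    exact ⟨h4, le_trans h2 h5, by rw [fireList_cons] at *; rw [h6, h3]⟩

lemma validSeq_append {A : V → V → ℕ} {H : Set (Finset V)} (L1 L2 : List (Finset V))
    (D : V → ℤ) :
    ValidSeq A H D (L1 ++ L2) ↔ ValidSeq A H D L1 ∧ ValidSeq A H (fireList A D L1) L2 := by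
  induction L1 generalizing D with
  | nil => simp [ValidSeq, fireList_nil]
  | cons M L ih =>
    constructor
    · rintro ⟨h1, h2, h3, h4⟩
      have h4' := (ih _).1 h4
      exact ⟨⟨h1, h2, h3, h4'.1⟩, h4'.2⟩
    · rintro ⟨⟨h1, h2, h3, h4⟩, h5⟩
      exact ⟨h1, h2, h3, (ih _).2 ⟨h4, h5⟩⟩

lemma validSeq_mem {A : V → V → ℕ} {H : Set (Finset V)} {D : V → ℤ} {L : List (Finset V)}
    (h : ValidSeq A H D L) : ∀ M ∈ L, M ∈ H ∧ M.Nonempty := by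
  induction L generalizing D with
  | nil => simp
  | cons M L ih =>
    obtain ⟨hM, hne, -, hL⟩ := h
    intro N hN
    rcases List.mem_cons.1 hN with rfl | h'
    · exact ⟨hM, hne⟩
    · exact ih hL N h'

lemma fireList_eq_fireVec (A : V → V → ℕ) (D : V → ℤ) (L : List (Finset V)) :
    fireList A D L = fireVec A D (L.map chi).sum := by
  induction L generalizing D with
  | nil => simp [fireList_nil, fireVec_zero]
  | cons M L ih =>
    rw [fireList_cons, ih, List.map_cons, List.sum_cons]
    unfold fireSet
    rw [fireVec_fireVec]

lemma chiSum_nonneg (L : List (Finset V)) (v : V) : 0 ≤ (L.map chi).sum v := by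
  induction L with
  | nil => simp
  | cons M L ih =>
    rw [List.map_cons, List.sum_cons]
    have : (0:ℤ) ≤ chi M v := by unfold chi; split <;> norm_num
    simpa using add_nonneg this ih

lemma chiSum_sink {v0 : V} (L : List (Finset V)) (h : ∀ M ∈ L, v0 ∉ M) :
    (L.map chi).sum v0 = 0 := by
  induction L with
  | nil => simp
  | cons M L ih =>
    rw [List.map_cons, List.sum_cons]
    have h1 : chi M v0 = 0 := by unfold chi; rw [if_neg (h M (List.mem_cons_self))]
    have h2 := ih fun N hN => h N (List.mem_cons_of_mem _ hN)
    simpa [h1] using h2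

lemma sum_chi (M : Finset V) : ∑ v, chi M v = (M.card : ℤ) := by
  unfold chi
  rw [Finset.sum_ite_mem, Finset.univ_inter]
  simp

lemma chiSum_total_pos {L : List (Finset V)} (h : ∀ M ∈ L, M.Nonempty) (hne : L ≠ []) :
    0 < ∑ v, (L.map chi).sum v := by
  cases L with
  | nil => exact absurd rfl hne
  | cons M L =>
    rw [List.map_cons, List.sum_cons]
    have h1 : ∑ v, (chi M + (L.map chi).sum) v = ∑ v, chi M v + ∑ v, (L.map chi).sum v := by
      rw [← Finset.sum_add_distrib]; rfl
    rw [h1, sum_chi]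
    have h2 : 0 ≤ ∑ v, (L.map chi).sum v :=
      Finset.sum_nonneg fun v _ => chiSum_nonneg L v
    have h3 : 0 < M.card := Finset.card_pos.2 (h M (List.mem_cons_self))
    have : (0:ℤ) < M.card := by exact_mod_cast h3
    linarith

lemma lap_kernel (A : V → V → ℕ) (hsymm : ∀ u w, A u w = A w u) (hloop : ∀ v, A v v = 0)
    (hconn : mConnected A) (v0 : V) (u : V → ℤ) (hnn : ∀ v, 0 ≤ u v) (h0 : u v0 = 0)
    (hker : ∀ v, ∑ w, mLap A v w * u w = 0) : ∀ v, u v = 0 := by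
  have key : ∀ v, u v = 0 → ∀ w, 0 < A v w → u w = 0 := by
    intro v hv w hw
    have h1 := hker v
    rw [← Finset.add_sum_erase _ _ (Finset.mem_univ v), mLap, if_pos rfl, hv, mul_zero,
      zero_add] at h1
    have h2 : ∀ x ∈ Finset.univ.erase v, mLap A v x * u x ≤ 0 := by
      intro x hx
      have hxv : v ≠ x := fun h => (Finset.mem_erase.1 hx).1 h.symm
      rw [mLap, if_neg hxv]
      have := hnn x
      nlinarith [Int.natCast_nonneg (A v x)]
    have h3 := (Finset.sum_eq_zero_iff_of_nonpos h2).1 h1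
    have hwv : v ≠ w := fun h => by rw [h, hloop] at hw; omega
    have h4 := h3 w (Finset.mem_erase.2 ⟨fun h => hwv h.symm, Finset.mem_univ w⟩)
    rw [mLap, if_neg hwv] at h4
    have hA : (0:ℤ) < A v w := by exact_mod_cast hw
    have := hnn w
    nlinarith
  have walk0 : ∀ (a b : V), (SimpleGraph.fromRel fun x y => 0 < A x y).Walk a b →
      u a = 0 → u b = 0 := by
    intro a b p
    induction p with
    | nil => exact id
    | cons h p ih =>
      intro ha
      apply ih
      rw [SimpleGraph.fromRel_adj] at h
      rcases h.2 with h' | h'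
      · exact key _ ha _ h'
      · exact key _ ha _ (by rw [hsymm]; exact h')
  intro v
  obtain ⟨p⟩ := hconn.preconnected v0 v
  exact walk0 v0 v p h0

end AuxChip3

section AuxChip4

variable {V : Type*} [Fintype V] [DecidableEq V]

lemma box_bound (v0 : V) (D E : V → ℤ) (hnn : ∀ v, v ≠ v0 → 0 ≤ E v)
    (hsink : D v0 ≤ E v0) (hsum : ∑ v, E v = ∑ v, D v) (v : V) :
    E v ∈ Finset.Icc (min (D v0) 0) (max (∑ w, D w) (∑ w, D w - D v0)) := by
  rw [Finset.mem_Icc]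
  by_cases hv : v = v0
  · subst hv
    refine ⟨le_trans (min_le_left _ _) hsink, le_trans ?_ (le_max_left _ _)⟩
    have h1 : (0:ℤ) ≤ ∑ w ∈ Finset.univ.erase v, E w :=
      Finset.sum_nonneg fun w hw => hnn w (Finset.mem_erase.1 hw).1
    have h2 : E v + ∑ w ∈ Finset.univ.erase v, E w = ∑ w, D w := by
      rw [Finset.add_sum_erase _ _ (Finset.mem_univ v), hsum]
    linarith
  · refine ⟨le_trans (min_le_right _ _) (hnn v hv), le_trans ?_ (le_max_right _ _)⟩
    have h2 : E v + ∑ w ∈ Finset.univ.erase v, E w = ∑ w, D w := by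
      rw [Finset.add_sum_erase _ _ (Finset.mem_univ v), hsum]
    have hv0 : v0 ∈ Finset.univ.erase v := Finset.mem_erase.2 ⟨Ne.symm hv, Finset.mem_univ _⟩
    have h3 : E v0 + ∑ w ∈ (Finset.univ.erase v).erase v0, E w
        = ∑ w ∈ Finset.univ.erase v, E w := Finset.add_sum_erase _ _ hv0
    have h4 : (0:ℤ) ≤ ∑ w ∈ (Finset.univ.erase v).erase v0, E w :=
      Finset.sum_nonneg fun w hw => hnn w (Finset.mem_erase.1 hw).1
    linarith

lemma prefix_ne (A : V → V → ℕ) (hsymm : ∀ u w, A u w = A w u) (hloop : ∀ v, A v v = 0)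
    (hconn : mConnected A) {v0 : V} {H : Set (Finset V)} (hH : Hereditary v0 H)
    {D : V → ℤ} {L : List (Finset V)} (hval : ValidSeq A H D L) {i j : ℕ} (hij : i < j)
    (hj : j ≤ L.length) :
    fireList A D (L.take i) ≠ fireList A D (L.take j) := by
  intro heq
  set L' := L.take j with hL'
  have hvalj : ValidSeq A H D L' := by
    have := (validSeq_append L' (L.drop j) D).1 (by rw [hL', List.take_append_drop]; exact hval)
    exact this.1
  have htake : L'.take i = L.take i := by
    rw [hL', List.take_take]
    congr 1
    omega
  have hsplit : ValidSeq A H (fireList A D (L.take i)) (L'.drop i) := by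
    have := (validSeq_append (L'.take i) (L'.drop i) D).1
      (by rw [List.take_append_drop]; exact hvalj)
    rw [htake] at this
    exact this.2
  have hCeq : fireList A (fireList A D (L.take i)) (L'.drop i) = fireList A D (L.take i) := by
    have h1 : fireList A D L' = fireList A (fireList A D (L'.take i)) (L'.drop i) := by
      rw [← fireList_append, List.take_append_drop]
    rw [htake] at h1
    rw [← h1, ← heq]
  set C := fireList A D (L.take i)
  set u := ((L'.drop i).map chi).sum with hu
  have hker : ∀ v, ∑ w, mLap A v w * u w = 0 := by
    intro v
    have h2 : fireVec A C u v = C v := by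
      rw [← fireList_eq_fireVec, hCeq]
    unfold fireVec at h2
    linarith
  have hmem := validSeq_mem hsplit
  have hzero := lap_kernel A hsymm hloop hconn v0 u (chiSum_nonneg _) 
    (chiSum_sink _ fun M hM => hH.1 M (hmem M hM).1) hker
  have hpos : 0 < ∑ v, u v := chiSum_total_pos (fun M hM => (hmem M hM).2)
    (by
      intro hnil
      have : (L'.drop i).length = 0 := by rw [hnil]; rfl
      rw [List.length_drop, hL', List.length_take] at this
      omega)
  have : ∑ v, u v = 0 := Finset.sum_eq_zero fun v _ => hzero v
  omega

lemma validSeq_length_lt (A : V → V → ℕ) (hsymm : ∀ u w, A u w = A w u)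
    (hloop : ∀ v, A v v = 0) (hconn : mConnected A) {v0 : V} {H : Set (Finset V)}
    (hH : Hereditary v0 H) (D : V → ℤ) (hnn : ∀ v, v ≠ v0 → 0 ≤ D v)
    {L : List (Finset V)} (hval : ValidSeq A H D L) :
    L.length < Fintype.card
      (V → (Finset.Icc (min (D v0) 0) (max (∑ w, D w) (∑ w, D w - D v0)) : Finset ℤ)) := by
  set lo := min (D v0) 0
  set hi := max (∑ w, D w) (∑ w, D w - D v0)
  have hbox : ∀ i : Fin (L.length + 1), ∀ v,
      fireList A D (L.take i) v ∈ Finset.Icc lo hi := by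
    intro i v
    have hvali : ValidSeq A H D (L.take i) :=
      ((validSeq_append (L.take i) (L.drop i) D).1
        (by rw [List.take_append_drop]; exact hval)).1
    obtain ⟨h1, h2, h3⟩ := fireList_invariant A hsymm hloop hH.1 hvali hnn
    exact box_bound v0 D _ h1 h2 h3 v
  set F : Fin (L.length + 1) → (V → (Finset.Icc lo hi : Finset ℤ)) :=
    fun i v => ⟨fireList A D (L.take i) v, hbox i v⟩ with hF
  have hinj : Function.Injective F := by
    intro i j hFij
    by_contra hne
    have key : ∀ i' j' : Fin (L.length + 1), i' < j' → F i' = F j' → False := by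
      intro i' j' hlt h
      refine prefix_ne A hsymm hloop hconn hH hval hlt (by omega : (j':ℕ) ≤ L.length) ?_
      funext v
      exact congrArg Subtype.val (congrFun h v)
    rcases lt_or_gt_of_ne hne with h | h
    · exact key i j h hFij
    · exact key j i h hFij.symm
  have := Fintype.card_le_of_injective F hinj
  have hcard : Fintype.card (Fin (L.length + 1)) = L.length + 1 := Fintype.card_fin _
  omega

lemma exists_stabilization (A : V → V → ℕ) (hsymm : ∀ u w, A u w = A w u)
    (hloop : ∀ v, A v v = 0) (hconn : mConnected A) {v0 : V} {H : Set (Finset V)}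
    (hH : Hereditary v0 H) (D : V → ℤ) (hnn : ∀ v, v ≠ v0 → 0 ≤ D v) :
    ∃ L, ValidSeq A H D L ∧ Stable A H (fireList A D L) := by
  classical
  set N := Fintype.card
      (V → (Finset.Icc (min (D v0) 0) (max (∑ w, D w) (∑ w, D w - D v0)) : Finset ℤ)) with hN
  have hbound : ∀ L : List (Finset V), ValidSeq A H D L → L.length < N :=
    fun L hL => validSeq_length_lt A hsymm hloop hconn hH D hnn hL
  set P : ℕ → Prop := fun n => ∃ L, ValidSeq A H D L ∧ L.length = n with hP
  have hP0 : P 0 := ⟨[], trivial, rfl⟩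
  set n := Nat.findGreatest P N with hn
  have hPn : P n := Nat.findGreatest_spec (Nat.zero_le N) hP0
  obtain ⟨L, hL, hlen⟩ := hPn
  refine ⟨L, hL, ?_⟩
  by_contra hns
  have hex : ∃ M ∈ H, M.Nonempty ∧ Ready A (fireList A D L) M := by
    unfold Stable at hns
    push_neg at hns
    obtain ⟨M, hM, hne, hr⟩ := hns
    exact ⟨M, hM, hne, hr⟩
  obtain ⟨M, hM, hne, hr⟩ := hex
  have hval' : ValidSeq A H D (L ++ [M]) :=
    (validSeq_append L [M] D).2 ⟨hL, ⟨hM, hne, hr, trivial⟩⟩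
  have hP1 : P (n + 1) := ⟨L ++ [M], hval', by simp [hlen]⟩
  have hle : n + 1 ≤ N := hbound _ hval'|>.trans_le (le_refl N) |> fun h => by
    have := hbound _ hval'
    simp [hlen] at this ⊢
    omega
  exact Nat.findGreatest_is_greatest (Nat.lt_succ_self n) hle hP1

end AuxChip4

/-- A stable configuration `ν` (nonnegative off the sink) is critical if and only if every
maximal finite sequence of firings of single active vertices starting from `ν - Q χ_{v₀}`
terminates at `ν`. -/
theorem critical_iff_maximal_active_sequences {V : Type*} [Fintype V] [DecidableEq V] (A : V → V → ℕ)
    (hsymm : ∀ u w, A u w = A w u) (hloop : ∀ v, A v v = 0) (hconn : mConnected A)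
    (v0 : V)
    (H : Set (Finset V)) (hH : Hereditary v0 H)
    (ν : V → ℤ) (hν : ∀ v, v ≠ v0 → 0 ≤ ν v) (hstable : Stable A H ν) :
    (Stable A H ν ∧ StabilizesTo A H (fireSet A ν {v0}) ν) ↔
      ∀ L : List V, ActiveSeq A H (fireSet A ν {v0}) L →
        (∀ v : V, ¬ Active A H (fireVerts A (fireSet A ν {v0}) L) v) →
        fireVerts A (fireSet A ν {v0}) L = ν := by
  set D0 := fireSet A ν {v0} with hD0def
  have hD0 : ∀ v, v ≠ v0 → 0 ≤ D0 v := fun v hv =>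
    le_trans (hν v hv) (le_fireSet_of_not_mem A hloop ν (by simpa using hv))
  constructor
  · rintro ⟨-, L, hval, hend, hst⟩ l hl hnoact
    have h1 : Relation.ReflTransGen (StepR A H) D0 ν := by
      obtain ⟨l', hl', he'⟩ := exists_activeSeq_of_validSeq A hH.2.1 hval
      have h := activeSeq_rtg hl'
      rwa [he', hend] at h
    have h2 := activeSeq_rtg hl
    obtain ⟨F, hF1, hF2⟩ := Relation.church_rosser (stepR_diamond A hloop hH.2.1) h1 h2
    exact (rtg_eq_of_normal hF2 hnoact).trans
      (rtg_eq_of_normal hF1 (not_active_of_stable hst)).symm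
  · intro hrhs
    refine ⟨hstable, ?_⟩
    obtain ⟨L, hval, hstab⟩ := exists_stabilization A hsymm hloop hconn hH D0 hD0
    obtain ⟨l, hl, he⟩ := exists_activeSeq_of_validSeq A hH.2.1 hval
    have hnoact : ∀ v, ¬ Active A H (fireVerts A D0 l) v := by
      rw [he]; exact not_active_of_stable hstab
    have hfin := hrhs l hl hnoact
    exact ⟨L, hval, by rw [← he, hfin], hstable⟩
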